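/- For all complex z with |z - 1/2| ≤ 1/2, z ≠ 0, and all real n ≥ 1, |z^n - 1| ≥ |z - 1|, where z^n denotes the principal complex power. -/

import Mathlib

open Real

set_option maxHeartbeats 2000000 in
lemma stmt13_l2 (x t n : ℝ) (ht0 : 0 ≤ t) (htx : t ≤ x) (hxt : x^2 ≤ t) (hx1 : x ≤ 1)
    (hn : 1 ≤ n) : t - t ^ n ≤ 2 * (x - x ^ n) := by
  rcases eq_or_lt_of_le ht0 with h | ht0'
  · have hx0 : x = 0 := by nlinarith
    simp [← h, hx0, Real.zero_rpow (by linarith : n ≠ 0)]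
  have hx0 : 0 < x := lt_of_lt_of_le ht0' htx
  have hn1 : 0 ≤ n - 1 := by linarith
  have e1 : t ^ n = t * t ^ (n - 1) := by
    rw [← Real.rpow_one_add' (le_of_lt ht0') (by linarith)]; ring_nf
  have e2 : (x ^ (2:ℝ)) ^ (n-1) = x ^ (2*n - 2) := by
    rw [← Real.rpow_mul (le_of_lt hx0)]; ring_nf
  have e3 : x * x ^ (2*n-2) = x ^ (2*n - 1) := by
    rw [← Real.rpow_one_add' (le_of_lt hx0) (by linarith)]; ring_nf
  have e4 : x ^ n = x * x ^ (n - 1) := by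
    rw [← Real.rpow_one_add' (le_of_lt hx0) (by linarith)]; ring_nf
  have e5 : (x ^ (n-1)) ^ 2 = x ^ (2*n-2) := by
    rw [sq, ← Real.rpow_add hx0]; ring_nf
  -- t^(n-1) ≥ (x^2)^(n-1)
  have hx2 : x ^ (2:ℝ) ≤ t := by rwa [Real.rpow_two]
  have h1 : (x ^ (2:ℝ)) ^ (n-1) ≤ t ^ (n-1) :=
    Real.rpow_le_rpow (Real.rpow_nonneg (le_of_lt hx0) 2) hx2 hn1
  have ht1 : t ^ (n-1) ≤ 1 := Real.rpow_le_one ht0 (le_trans htx hx1) hn1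
  -- t - t^n = t*(1 - t^(n-1)) ≤ x*(1 - x^(2n-2)) = x - x^(2n-1)
  have step1 : t - t ^ n ≤ x - x ^ (2*n-1) := by
    have : t * (1 - t ^ (n-1)) ≤ x * (1 - x ^ (2*n-2)) := by
      apply mul_le_mul htx _ (by linarith) (le_of_lt hx0)
      rw [← e2]; linarith
    calc t - t ^ n = t * (1 - t ^ (n-1)) := by rw [e1]; ring
    _ ≤ x * (1 - x ^ (2*n-2)) := this
    _ = x - x ^ (2*n-1) := by rw [mul_sub, e3, mul_one]
  -- x - x^(2n-1) ≤ 2(x - x^n) : x*(1-x^(n-1))^2 ≥ 0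
  have step2 : x - x ^ (2*n-1) ≤ 2 * (x - x ^ n) := by
    have hsq : 0 ≤ x * (1 - x ^ (n-1))^2 := by positivity
    have expand : x * (1 - x ^ (n-1))^2 = x - 2 * x ^ n + x ^ (2*n-1) := by
      linear_combination 2*e4 + x*e5 + e3
    nlinarith [hsq, expand]
  linarith

-- L1 : cos (n θ) ≤ cos θ ^ n  when 0 ≤ θ, 1 ≤ n, n θ ≤ π/2
set_option maxHeartbeats 2000000 in
lemma stmt13_l1 (θ n : ℝ) (hθ0 : 0 ≤ θ) (hn : 1 ≤ n) (hnθ : n * θ ≤ π / 2) :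
    Real.cos (n * θ) ≤ Real.cos θ ^ n := by
  have key : ∀ t : ℝ, HasDerivAt (fun s => Real.cos s ^ n - Real.cos (n * s))
      (n * Real.cos t ^ (n-1) * (-Real.sin t) - (-Real.sin (n*t) * n)) t := by
    intro t
    have h1 : HasDerivAt (fun s => Real.cos s ^ n) (n * Real.cos t ^ (n-1) * (-Real.sin t)) t :=
      (Real.hasDerivAt_rpow_const (Or.inr hn)).comp t (Real.hasDerivAt_cos t)
    have h2 : HasDerivAt (fun s => Real.cos (n * s)) (-Real.sin (n*t) * n) t := by
      have := (Real.hasDerivAt_cos (n*t)).comp t ((hasDerivAt_id t).const_mul n)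
      simpa [mul_comm, Function.comp_def] using this
    exact h1.sub h2
  have diff : Differentiable ℝ (fun s => Real.cos s ^ n - Real.cos (n * s)) :=
    fun t => (key t).differentiableAt
  have mono : MonotoneOn (fun s => Real.cos s ^ n - Real.cos (n * s)) (Set.Icc 0 θ) := by
    apply monotoneOn_of_deriv_nonneg (convex_Icc 0 θ) diff.continuous.continuousOn
      diff.differentiableOn
    intro t ht
    rw [interior_Icc] at ht
    rw [(key t).deriv]
    have ht0 : 0 < t := ht.1
    have htθ : t < θ := ht.2
    have hsin : 0 ≤ Real.sin t := Real.sin_nonneg_of_nonneg_of_le_pi (le_of_lt ht0) (by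
      have hπ : θ ≤ π / 2 := by nlinarith [Real.pi_pos]
      nlinarith [Real.pi_pos])
    have hcos1 : Real.cos t ^ (n-1) ≤ 1 :=
      Real.rpow_le_one (Real.cos_nonneg_of_mem_Icc ⟨by linarith [Real.pi_pos], by nlinarith [Real.pi_pos]⟩)
        (Real.cos_le_one t) (by linarith)
    have hsinmono : Real.sin t ≤ Real.sin (n * t) := by
      have h1 : t ≤ n * t := by nlinarith
      have h2 : n * t ≤ π / 2 := by nlinarith
      exact Real.strictMonoOn_sin.monotoneOn ⟨by linarith, by linarith⟩
        ⟨by linarith [Real.pi_pos], h2⟩ h1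
    have : Real.cos t ^ (n-1) * Real.sin t ≤ Real.sin (n*t) := by
      calc Real.cos t ^ (n-1) * Real.sin t ≤ 1 * Real.sin t :=
        mul_le_mul_of_nonneg_right hcos1 hsin
      _ = Real.sin t := one_mul _
      _ ≤ Real.sin (n*t) := hsinmono
    nlinarith [this]
  have := mono (Set.left_mem_Icc.2 hθ0) (Set.right_mem_Icc.2 hθ0) hθ0
  simp only [mul_zero, Real.cos_zero, Real.one_rpow] at this
  linarith
set_option maxHeartbeats 2000000 in
lemma stmt13_poly1 (θ : ℝ) (h1 : 0.4 ≤ θ) (h2 : θ < π/2) :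
    0.6931471808 * θ < (3*π/2 - 2*θ) * (θ^2/2) * (1 - θ^2/16)^2 := by
  have hπ : 3.141592 < π := Real.pi_gt_d6
  have hπ' : π < 3.141593 := Real.pi_lt_d6
  have hθ2 : θ < 1.5707965 := by linarith
  have key : 0.6931471808 * 2 < (3*π/2 - 2*θ) * θ * (1 - θ^2/16)^2 := by
    rcases le_or_gt θ 0.6 with h | h
    · have e0 : (0.9775:ℝ) ≤ 1 - θ^2/16 := by nlinarith
      have e1 : (0.9555:ℝ) ≤ (1 - θ^2/16)^2 := by nlinarith [mul_le_mul e0 e0 (by norm_num) (by linarith)]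
      have e2 : (1.4509:ℝ) ≤ (3*π/2 - 2*θ) * θ := by nlinarith [mul_nonneg (sub_nonneg.2 h1) (sub_nonneg.2 h)]
      nlinarith [mul_le_mul e2 e1 (by norm_num) (by nlinarith)]
    rcases le_or_gt θ 1 with h' | h'
    · have e0 : (0.9375:ℝ) ≤ 1 - θ^2/16 := by nlinarith
      have e1 : (0.8789:ℝ) ≤ (1 - θ^2/16)^2 := by nlinarith [mul_le_mul e0 e0 (by norm_num) (by linarith)]
      have e2 : (1.578:ℝ) ≤ (3*π/2 - 2*θ) * θ := by nlinarith [mul_nonneg (sub_nonneg.2 h.le) (sub_nonneg.2 h')]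
      nlinarith [mul_le_mul e2 e1 (by norm_num) (by nlinarith)]
    · have e0 : (0.8457:ℝ) ≤ 1 - θ^2/16 := by nlinarith
      have e1 : (0.7152:ℝ) ≤ (1 - θ^2/16)^2 := by nlinarith [mul_le_mul e0 e0 (by norm_num) (by linarith)]
      have e2 : (2.467:ℝ) ≤ (3*π/2 - 2*θ) * θ := by nlinarith [mul_nonneg (sub_nonneg.2 h'.le) (sub_nonneg.2 hθ2.le)]
      nlinarith [mul_le_mul e2 e1 (by norm_num) (by nlinarith)]
  nlinarith [key, h1]
set_option maxHeartbeats 2000000 in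
lemma stmt13_poly2 (θ M : ℝ) (h1 : 0 < θ) (h2 : θ ≤ 0.4) (h3 : 2.11 * θ ≤ M) :
    θ^2 * (1+M) ≤ 0.92 * M^2 := by
  have hθ2 : θ^2 ≤ 0.16 := by nlinarith
  rcases le_or_gt M 3 with h | h
  · nlinarith [sq_nonneg (M - 2.11*θ), mul_nonneg (sub_nonneg.2 h3) (sub_nonneg.2 h)]
  · nlinarith [sq_nonneg (M-3)]

set_option maxHeartbeats 2000000 in
lemma stmt13_sin_lb (θ : ℝ) (hθ0 : 0 < θ) (hθ : θ ≤ π/2) :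
    (θ^2/2) * (1 - θ^2/16)^2 ≤ 1 - Real.cos θ := by
  have hπ' : π < 3.141593 := Real.pi_lt_d6
  have hhalf : Real.cos θ = 1 - 2 * Real.sin (θ/2)^2 := by
    have h1 : Real.cos (2*(θ/2)) = 1 - 2 * Real.sin (θ/2)^2 := by
      rw [Real.cos_two_mul']
      nlinarith [Real.sin_sq_add_cos_sq (θ/2)]
    rw [show 2*(θ/2) = θ by ring] at h1
    exact h1
  have hs : θ/2 - (θ/2)^3/4 < Real.sin (θ/2) := lt_of_le_of_lt (by have := pow_pos (by linarith : (0:ℝ) < θ/2) 3; linarith) (Real.sin_gt_sub_cube (by linarith : 0 < θ/2))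
  have ht25 : θ*θ ≤ 2.5 := by nlinarith
  have hlb : 0 ≤ θ/2 - (θ/2)^3/4 := by nlinarith [ht25, hθ0]
  have hsq : (θ/2 - (θ/2)^3/4)^2 ≤ Real.sin (θ/2)^2 := pow_le_pow_left₀ hlb hs.le 2
  nlinarith [hsq, ht25, hθ0, sq_nonneg θ, pow_nonneg hθ0.le 6,
    mul_le_mul_of_nonneg_left ht25 (mul_nonneg hθ0.le hθ0.le)]

set_option maxHeartbeats 1600000 in
lemma stmt13_small (r θ n : ℝ) (hr : 0 < r) (hrc : r ≤ Real.cos θ) (hθ0 : 0 < θ)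
    (hθ : θ ≤ 0.4) (h3 : 3*π/2 ≤ n*θ) :
    2 * r ^ n - (r ^ n)^2 ≤ 2 * r * Real.cos θ - r^2 := by
  have hπ : 3.141592 < π := Real.pi_gt_d6
  set c := Real.cos θ with hcdef
  have hc0 : 0 < c := lt_of_lt_of_le hr hrc
  have hc1 : c ≤ 1 := Real.cos_le_one θ
  have hn0 : 0 < n := by nlinarith
  have hn11 : 11 ≤ n := by nlinarith [mul_le_mul_of_nonneg_left hθ hn0.le]
  have hw1 : 2 * (1 - c) ≤ θ^2 := by
    nlinarith [Real.one_sub_sq_div_two_le_cos (x := θ)]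
  have h92 : (0.92:ℝ) ≤ c := by nlinarith
  have hw0 : 0.49 * θ^2 ≤ 1 - c := by
    have hl := stmt13_sin_lb θ hθ0 (by nlinarith)
    have ht : θ^2 ≤ 0.16 := by nlinarith
    nlinarith [hl, ht, mul_le_mul_of_nonneg_left ht (sq_nonneg θ),
      pow_nonneg hθ0.le 6, sq_nonneg θ]
  set M := (n-1) * (1-c) with hMdef
  have hA : (4.312:ℝ) ≤ (n-1)*θ := by nlinarith
  have hMθ : 2.11 * θ ≤ M := by
    have h' := mul_le_mul hA hw0 (by positivity) (by linarith)
    have h'' : 2.11*θ*θ ≤ M*θ := by nlinarith [h']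
    exact le_of_mul_le_mul_right (by linarith [h'']) hθ0
  have hM0 : 0 < M := lt_of_lt_of_le (by positivity) hMθ
  -- Bernoulli
  set P := c ^ (n-1) with hPdef
  have hP0 : 0 < P := Real.rpow_pos_of_pos hc0 _
  have hpc : P * (1+M) ≤ 1 := by
    have hb := one_add_mul_self_le_rpow_one_add
      (show (-1:ℝ) ≤ (1-c)/c from le_trans (by norm_num) (div_nonneg (by linarith) hc0.le)) (show (1:ℝ) ≤ n - 1 by linarith)
    have e1 : (1 + (1-c)/c) = c⁻¹ := by field_simp; ring
    rw [e1, Real.inv_rpow hc0.le] at hb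
    have e2 : 1 + M ≤ 1 + (n-1) * ((1-c)/c) := by
      have : (1-c) ≤ (1-c)/c := by
        rw [le_div_iff₀ hc0]; nlinarith
      nlinarith [this]
    have e3 : 1 + M ≤ (P)⁻¹ := le_trans e2 hb
    calc P * (1+M) ≤ P * P⁻¹ := mul_le_mul_of_nonneg_left e3 hP0.le
    _ = 1 := mul_inv_cancel₀ (ne_of_gt hP0)
  have hpc1 : P ≤ 1 := Real.rpow_le_one hc0.le hc1 (by linarith)
  have hcn2 : c ^ (n-2) * c = P := by
    rw [hPdef, show n-1 = (n-2)+1 by ring, Real.rpow_add hc0, Real.rpow_one]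
  -- T1
  have hP1 : 0 ≤ 1 - P := by linarith
  have k2 : M ≤ (1-P)*(1+M) := by nlinarith [hpc]
  have hM2 : M^2 ≤ ((1-P)*(1+M))^2 := pow_le_pow_left₀ hM0.le k2 2
  have hpoly := stmt13_poly2 θ M hθ0 hθ hMθ
  have hposfac : (0:ℝ) < c * (1+M)^2 := by positivity
  have T1 : θ^2 * c ^ (n-2) ≤ (1 - P)^2 := by
    have chain : θ^2 * c ^ (n-2) * (c*(1+M)^2) ≤ (1-P)^2 * (c*(1+M)^2) := by
      have c1 : θ^2 * c ^ (n-2) * (c*(1+M)^2) = (θ^2*(1+M)) * (c ^ (n-2) * c * (1+M)) := by ring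
      have c2 : c ^ (n-2) * c * (1+M) ≤ 1 := by rw [hcn2]; exact hpc
      calc θ^2 * c ^ (n-2) * (c*(1+M)^2) = (θ^2*(1+M)) * (c ^ (n-2) * c * (1+M)) := c1
      _ ≤ (θ^2*(1+M)) * 1 := mul_le_mul_of_nonneg_left c2 (by positivity)
      _ = θ^2*(1+M) := mul_one _
      _ ≤ 0.92 * M^2 := hpoly
      _ ≤ c * M^2 := by nlinarith [sq_nonneg M]
      _ ≤ c * ((1-P)*(1+M))^2 := by nlinarith [hM2]
      _ = (1-P)^2 * (c*(1+M)^2) := by ring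
    exact le_of_mul_le_mul_right chain hposfac
  -- conclude
  set p := r ^ (n-1) with hpdef
  have hp0 : 0 ≤ p := Real.rpow_nonneg hr.le _
  have hpP : p ≤ P := Real.rpow_le_rpow hr.le hrc (by linarith)
  have hp1 : p ≤ 1 := le_trans hpP hpc1
  have hrn2 : r ^ (n-2) ≤ c ^ (n-2) := Real.rpow_le_rpow hr.le hrc (by linarith)
  have hrn2' : r ^ (n-2) * r = p := by
    rw [hpdef, show n-1 = (n-2)+1 by ring, Real.rpow_add hr, Real.rpow_one]
  have hT2 : θ^2 * p ≤ r * (1-p)^2 := by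
    have s1 : θ^2 * (r ^ (n-2)) ≤ (1-P)^2 := le_trans (by nlinarith [hrn2, sq_nonneg θ]) T1
    have s2 : (1-P)^2 ≤ (1-p)^2 := by nlinarith [hpP, hP1, hp1]
    calc θ^2 * p = r * (θ^2 * (r ^ (n-2))) := by rw [← hrn2']; ring
    _ ≤ r * (1-p)^2 := mul_le_mul_of_nonneg_left (le_trans s1 s2) hr.le
  have h2p : 2*(1-c)*p ≤ r*(1-p)^2 := by nlinarith [hw1, hp0, hT2]
  have hq : r ^ n = r * p := by
    have e : r * r^(n-1) = r^(1+(n-1)) := by rw [Real.rpow_add hr, Real.rpow_one]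
    rw [hpdef, e]; congr 1; ring
  rw [hq]
  nlinarith [mul_le_mul_of_nonneg_left h2p hr.le,
    mul_nonneg (mul_nonneg hr.le hr.le) hp0,
    mul_nonneg (sub_nonneg.2 hrc) (sub_nonneg.2 hp1), hr.le, sq_nonneg (1-p)]

set_option maxHeartbeats 2000000 in
lemma stmt13_A (r θ n : ℝ) (hr : 0 < r) (hrc : r ≤ Real.cos θ) (hθ0 : 0 < θ) (hθπ : θ < π/2)
    (h3 : 3*π/2 ≤ n*θ) :
    2 * r ^ n - (r ^ n)^2 ≤ 2 * r * Real.cos θ - r^2 := by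
  rcases le_or_gt θ 0.4 with h | h
  · exact stmt13_small r θ n hr hrc hθ0 h h3
  by_contra hcon
  push_neg at hcon
  have hπ : 3.141592 < π := Real.pi_gt_d6
  set c := Real.cos θ with hcdef
  have hc0 : 0 < c := lt_of_lt_of_le hr hrc
  have hq0 : 0 < r ^ n := Real.rpow_pos_of_pos hr n
  have hstep : r^2 < 2 * r ^ n := by nlinarith [sq_nonneg (r ^ n)]
  have hn3 : 3 ≤ n := by
    by_contra hn3'; push_neg at hn3'
    have : n * θ < 3 * θ := by nlinarith
    nlinarith
  have hn2 : 0 ≤ n - 2 := by linarith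
  have er : r ^ n = r^2 * r^(n-2) := by
    have e2 : r ^ (((2:ℕ)):ℝ) = r^(2:ℕ) := Real.rpow_natCast r 2
    calc r ^ n = r ^ ((2:ℝ)+(n-2)) := by congr 1; ring
    _ = r ^ (2:ℝ) * r ^ (n-2) := Real.rpow_add hr _ _
    _ = r^2 * r^(n-2) := by rw [show ((2:ℝ)) = (((2:ℕ)):ℝ) by norm_num, e2]
  have hhalf : 1/2 < r ^ (n-2) := by
    by_contra hh; push_neg at hh
    have h5 : r^2 * r^(n-2) ≤ r^2 * (1/2) := mul_le_mul_of_nonneg_left hh (sq_nonneg r)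
    rw [er] at hstep; nlinarith
  have hlog1 : Real.log (1/2) < (n-2) * Real.log r := by
    have := Real.log_lt_log (by norm_num : (0:ℝ) < 1/2) hhalf
    rwa [Real.log_rpow hr] at this
  have hlog2 : Real.log (1/2) = - Real.log 2 := by
    rw [show (1:ℝ)/2 = 2⁻¹ by norm_num, Real.log_inv]
  have hlr : Real.log r ≤ r - 1 := Real.log_le_sub_one_of_pos hr
  have hnw : (n-2) * (1-c) < Real.log 2 := by
    have t1 : (n-2)*(1-c) ≤ (n-2)*(1-r) := mul_le_mul_of_nonneg_left (by linarith) hn2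
    have t2 : (n-2)*(1-r) ≤ (n-2)*(-Real.log r) := mul_le_mul_of_nonneg_left (by linarith) hn2
    have t3 : (n-2)*(-Real.log r) < Real.log 2 := by nlinarith [hlog1, hlog2]
    linarith
  have hl2 : Real.log 2 < 0.6931471808 := Real.log_two_lt_d9
  have hwlb := stmt13_sin_lb θ hθ0 (le_of_lt hθπ)
  have hp1 := stmt13_poly1 θ (by linarith) hθπ
  have hA : 3*π/2 - 2*θ ≤ (n-2)*θ := by nlinarith
  have hprod : (3*π/2 - 2*θ) * ((θ^2/2) * (1 - θ^2/16)^2) ≤ ((n-2)*θ) * (1-c) := by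
    apply mul_le_mul hA hwlb (by positivity) (by nlinarith)
  have hfin : ((n-2)*(1-c))*θ < 0.6931471808*θ := by nlinarith [hnw, hl2, hθ0]
  nlinarith [hp1, hprod, hfin]

-- the main real inequality, θ ≥ 0 version
set_option maxHeartbeats 2000000 in
lemma stmt13_main0 (r θ n : ℝ) (hr : 0 < r) (hrc : r ≤ Real.cos θ) (hθ0 : 0 ≤ θ)
    (hθπ : θ < π/2) (hn : 1 ≤ n) :
    r^2 - 2*r*Real.cos θ ≤ (r ^ n)^2 - 2*(r ^ n)*Real.cos (n*θ) := by
  have hc0 : 0 < Real.cos θ := lt_of_lt_of_le hr hrc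
  have hc1 : Real.cos θ ≤ 1 := Real.cos_le_one θ
  have hq0 : 0 < r ^ n := Real.rpow_pos_of_pos hr n
  have hr1 : r ≤ 1 := le_trans hrc hc1
  rcases le_or_gt (Real.cos (n*θ)) 0 with hcn | hcn
  · -- easy case
    have h1 : r^2 - 2*r*Real.cos θ ≤ -r^2 := by nlinarith
    nlinarith [mul_nonneg hq0.le (neg_nonneg.2 hcn), sq_nonneg (r ^ n)]
  rcases le_or_gt (n*θ) (π/2) with hle | hgt
  · -- concavity case
    have hL1 := stmt13_l1 θ n hθ0 hn hle
    have hc2 : 0 ≤ 1 - Real.cos θ^2 := by nlinarith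
    have hxt : (r*Real.cos θ)^2 ≤ r^2 := by nlinarith [mul_nonneg (sq_nonneg r) hc2]
    have htx : r^2 ≤ r*Real.cos θ := by nlinarith
    have hx1 : r*Real.cos θ ≤ 1 := by nlinarith
    have hL2 : r^2 - (r^2) ^ n ≤ 2*((r*Real.cos θ) - (r*Real.cos θ) ^ n) :=
      stmt13_l2 (r*Real.cos θ) (r^2) n (sq_nonneg r) htx hxt hx1 hn
    have e1 : (r*Real.cos θ) ^ n = r ^ n * Real.cos θ ^ n :=
      Real.mul_rpow hr.le hc0.le
    have e2 : (r^2) ^ n = (r ^ n)^2 := by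
      rw [← Real.rpow_natCast (r ^ n) 2, ← Real.rpow_natCast r 2,
        ← Real.rpow_mul hr.le, ← Real.rpow_mul hr.le]
      congr 1; ring
    rw [e1, e2] at hL2
    have h3 : r ^ n * Real.cos (n*θ) ≤ r ^ n * Real.cos θ ^ n :=
      mul_le_mul_of_nonneg_left hL1 hq0.le
    nlinarith [hL2, h3]
  · -- large angle case
    rcases le_or_gt (Real.cos (n*θ)) 0 with hcn' | hcn'
    · have h1 : r^2 - 2*r*Real.cos θ ≤ -r^2 := by nlinarith
      nlinarith [mul_nonneg hq0.le (neg_nonneg.2 hcn'), sq_nonneg (r ^ n)]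
    have hθ0' : 0 < θ := by
      rcases eq_or_lt_of_le hθ0 with h | h
      · exfalso; rw [← h] at hgt; simp at hgt; nlinarith [Real.pi_pos]
      · exact h
    have h32 : 3*π/2 ≤ n*θ := by
      by_contra hh; push_neg at hh
      have : Real.cos (n*θ) ≤ 0 :=
        Real.cos_nonpos_of_pi_div_two_le_of_le (le_of_lt hgt) (by linarith)
      linarith
    have hA := stmt13_A r θ n hr hrc hθ0' hθπ h32
    have hcn1 : Real.cos (n*θ) ≤ 1 := Real.cos_le_one _
    nlinarith [mul_le_mul_of_nonneg_left hcn1 hq0.le]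

set_option maxHeartbeats 2000000 in
lemma stmt13_main (r θ n : ℝ) (hr : 0 < r) (hrc : r ≤ Real.cos θ) (hθπ : |θ| < π/2)
    (hn : 1 ≤ n) :
    r^2 - 2*r*Real.cos θ ≤ (r ^ n)^2 - 2*(r ^ n)*Real.cos (n*θ) := by
  rcases le_or_gt 0 θ with h | h
  · exact stmt13_main0 r θ n hr hrc h (lt_of_le_of_lt (le_abs_self θ) hθπ) hn
  · have := stmt13_main0 r (-θ) n hr (by rwa [Real.cos_neg]) (by linarith)
      (lt_of_le_of_lt (neg_le_abs θ) hθπ) hn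
    rw [Real.cos_neg, show n * -θ = -(n*θ) by ring, Real.cos_neg] at this
    exact this

set_option maxHeartbeats 2000000 in
theorem stmt13 (z : ℂ) (hz : ‖z - 1/2‖ ≤ 1/2) (hz0 : z ≠ 0) (n : ℝ) (hn : 1 ≤ n) :
    ‖z - 1‖ ≤ ‖z ^ (n : ℂ) - 1‖ := by
  set r := ‖z‖ with hrdef
  set θ := Complex.arg z with hθdef
  have hr0 : 0 < r := norm_pos_iff.2 hz0
  have habs := Complex.norm_mul_cos_add_sin_mul_I z
  have hre : z.re = r * Real.cos θ := by
    conv_lhs => rw [← habs]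
    simp [hrdef, hθdef, Complex.mul_re, Complex.add_re, Complex.add_im, Complex.mul_im,
      Complex.cos_ofReal_re, Complex.sin_ofReal_re, Complex.cos_ofReal_im,
      Complex.sin_ofReal_im]
  have him : z.im = r * Real.sin θ := by
    conv_lhs => rw [← habs]
    simp [hrdef, hθdef, Complex.mul_re, Complex.add_re, Complex.add_im, Complex.mul_im,
      Complex.cos_ofReal_re, Complex.sin_ofReal_re, Complex.cos_ofReal_im,
      Complex.sin_ofReal_im]
  have hd : Complex.normSq (z - 1/2) ≤ 1/4 := by
    rw [← Complex.sq_norm]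
    nlinarith [hz, norm_nonneg (z - 1/2)]
  have hr2 : r^2 = z.re^2 + z.im^2 := by
    rw [hrdef, Complex.sq_norm, Complex.normSq_apply]; ring
  have hzre : r^2 ≤ z.re := by
    have e : (z - 1/2).re = z.re - 1/2 := by norm_num [Complex.sub_re]
    have e' : (z - 1/2).im = z.im := by norm_num [Complex.sub_im]
    rw [Complex.normSq_apply, e, e'] at hd
    nlinarith [hd, hr2]
  have hrc : r ≤ Real.cos θ := by
    have h1 : r * r ≤ r * Real.cos θ := by nlinarith [hzre, hre, hr2]
    exact le_of_mul_le_mul_left h1 hr0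
  have hθπ : |θ| < π/2 := Complex.abs_arg_lt_pi_div_two_iff.2 (Or.inl (by nlinarith [hzre]))
  have hzn : z ^ (n : ℂ) = (↑(r ^ n) : ℂ) * (Real.cos (n*θ) + Real.sin (n*θ) * Complex.I) := by
    rw [Complex.cpow_def_of_ne_zero hz0, Complex.exp_eq_exp_re_mul_sin_add_cos]
    have hre' : (Complex.log z * ↑n).re = Real.log r * n := by
      simp [Complex.mul_re, Complex.log_re, Complex.log_im, hrdef]
    have him' : (Complex.log z * ↑n).im = n * θ := by
      simp [Complex.mul_im, Complex.log_re, Complex.log_im]; ring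
    rw [hre', him', ← Complex.ofReal_exp, ← Complex.ofReal_cos, ← Complex.ofReal_sin,
      ← Real.rpow_def_of_pos hr0]
  have hznre : (z ^ (n:ℂ) - 1).re = r ^ n * Real.cos (n*θ) - 1 := by
    rw [hzn]
    simp only [Complex.sub_re, Complex.sub_im, Complex.mul_re, Complex.mul_im,
      Complex.add_re, Complex.add_im, Complex.ofReal_re, Complex.ofReal_im,
      Complex.I_re, Complex.I_im, Complex.one_re, Complex.one_im]
    ring
  have hznim : (z ^ (n:ℂ) - 1).im = r ^ n * Real.sin (n*θ) := by
    rw [hzn]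
    simp only [Complex.sub_re, Complex.sub_im, Complex.mul_re, Complex.mul_im,
      Complex.add_re, Complex.add_im, Complex.ofReal_re, Complex.ofReal_im,
      Complex.I_re, Complex.I_im, Complex.one_re, Complex.one_im]
    ring
  have key := stmt13_main r θ n hr0 hrc hθπ hn
  have e1 : ‖z - 1‖^2 = r^2 - 2*r*Real.cos θ + 1 := by
    rw [Complex.sq_norm, Complex.normSq_apply]
    simp only [Complex.sub_re, Complex.sub_im, Complex.one_re, Complex.one_im, hre, him]
    linear_combination (r^2) * (Real.sin_sq_add_cos_sq θ)
  have e2 : ‖z ^ (n:ℂ) - 1‖^2 = (r ^ n)^2 - 2*(r ^ n)*Real.cos (n*θ) + 1 := by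
    rw [Complex.sq_norm, Complex.normSq_apply, hznre, hznim]
    linear_combination ((r^n)^2) * (Real.sin_sq_add_cos_sq (n*θ))
  apply le_of_pow_le_pow_left₀ two_ne_zero (norm_nonneg _)
  rw [e1, e2]; linarith
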